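/- (Cycle Lemma) Let (F_v)_{v∈V(G)} be a representation of a restricted frame graph G. For every induced cycle C of G there is a vertex v of C such that F_v contains the frame F_u of every vertex u of C with u ∉ N[v]. Moreover, if u and v are two distinct vertices of C each having this property, then u and v are adjacent. -/

import Mathlib

/-! ## Frames and restricted frame graphs -/

/-- An axis-parallel box in `ℝ²`, i.e. a product `[x1,x2] × [y1,y2]` of two closed
nondegenerate intervals. -/
structure Box : Type where
  x1 : ℝ
  x2 : ℝ
  y1 : ℝ
  y2 : ℝ
  hx : x1 < x2
  hy : y1 < y2

namespace Box

/-- The region bounded by the frame of a box: the closed box itself. -/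
def region (B : Box) : Set (ℝ × ℝ) :=
  {p : ℝ × ℝ | B.x1 ≤ p.1 ∧ p.1 ≤ B.x2 ∧ B.y1 ≤ p.2 ∧ p.2 ≤ B.y2}

/-- The frame of a box: the topological boundary of the closed box. -/
def frame (B : Box) : Set (ℝ × ℝ) :=
  {p : ℝ × ℝ | p ∈ B.region ∧ (p.1 = B.x1 ∨ p.1 = B.x2 ∨ p.2 = B.y1 ∨ p.2 = B.y2)}

/-- The left side `{x1} × [y1,y2]` of a frame. -/
def leftSide (B : Box) : Set (ℝ × ℝ) :=
  {p : ℝ × ℝ | p.1 = B.x1 ∧ B.y1 ≤ p.2 ∧ p.2 ≤ B.y2}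

/-- The right side `{x2} × [y1,y2]` of a frame. -/
def rightSide (B : Box) : Set (ℝ × ℝ) :=
  {p : ℝ × ℝ | p.1 = B.x2 ∧ B.y1 ≤ p.2 ∧ p.2 ≤ B.y2}

/-- The top side `[x1,x2] × {y2}` of a frame. -/
def topSide (B : Box) : Set (ℝ × ℝ) :=
  {p : ℝ × ℝ | p.2 = B.y2 ∧ B.x1 ≤ p.1 ∧ p.1 ≤ B.x2}

/-- The bottom side `[x1,x2] × {y1}` of a frame. -/
def bottomSide (B : Box) : Set (ℝ × ℝ) :=
  {p : ℝ × ℝ | p.2 = B.y1 ∧ B.x1 ≤ p.1 ∧ p.1 ≤ B.x2}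

/-- The four corners of a frame. -/
def corners (B : Box) : Set (ℝ × ℝ) :=
  {(B.x1, B.y1), (B.x1, B.y2), (B.x2, B.y1), (B.x2, B.y2)}

/-- `Box.Inside inner outer` : the frame of `outer` contains the frame of `inner`,
i.e. the two frames are disjoint and the frame of `inner` is contained in the region
bounded by the frame of `outer`. -/
def Inside (inner outer : Box) : Prop :=
  inner.frame ∩ outer.frame = ∅ ∧ inner.frame ⊆ outer.region

/-- `Box.Outside B outer` : the frames are disjoint and `B` is not inside `outer`. -/
def Outside (B outer : Box) : Prop :=
  B.frame ∩ outer.frame = ∅ ∧ ¬ Inside B outer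

end Box

/-- A family of frames `(F v)` is a representation of the graph `G` as a restricted
frame graph: distinct vertices are adjacent iff their frames intersect, and the four
restrictions on the representation hold. -/
structure IsFrameRepresentation {V : Type} (G : SimpleGraph V) (F : V → Box) : Prop where
  /-- Distinct vertices are adjacent iff their frames intersect. -/
  adj_iff : ∀ u v : V, u ≠ v → (G.Adj u v ↔ ((F u).frame ∩ (F v).frame).Nonempty)
  /-- (1) Corners of a frame do not coincide with any point of another frame. -/
  corner_free : ∀ u v : V, u ≠ v → (F u).corners ∩ (F v).frame = ∅
  /-- (2) The left side of a frame does not intersect any other frame. -/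
  left_free : ∀ u v : V, u ≠ v → (F u).leftSide ∩ (F v).frame = ∅
  /-- (3) If the right side of a frame intersects a second frame, this right side
  intersects both the top and the bottom side of that second frame. -/
  right_cross : ∀ u v : V, u ≠ v →
    ((F u).rightSide ∩ (F v).frame).Nonempty →
    ((F u).rightSide ∩ (F v).topSide).Nonempty ∧
      ((F u).rightSide ∩ (F v).bottomSide).Nonempty
  /-- (4) If two frames intersect, no third frame is entirely contained in the
  intersection of the regions bounded by the two frames. -/
  not_nested : ∀ u v w : V, u ≠ v → w ≠ u → w ≠ v →
    ((F u).frame ∩ (F v).frame).Nonempty →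
    ¬ ((F w).frame ⊆ (F u).region ∩ (F v).region)

/-- A graph is a restricted frame graph if it admits a frame representation. -/
def IsRestrictedFrameGraph {V : Type} (G : SimpleGraph V) : Prop :=
  ∃ F : V → Box, IsFrameRepresentation G F

/-! ## Basic graph notions -/

/-- The closed neighborhood `N[u] = {u} ∪ N(u)`. -/
def closedNbhd {V : Type} (G : SimpleGraph V) (u : V) : Set V :=
  insert u (G.neighborSet u)

/-- `G` has a full star-cutset: for some vertex `u` the removal of `N[u]`
disconnects `G`. -/
def HasFullStarCutset {V : Type} (G : SimpleGraph V) : Prop :=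
  ∃ u : V, ¬ (G.induce ((closedNbhd G u)ᶜ)).Preconnected

/-- `v` is a cut-vertex of `G`: its removal disconnects `G`. -/
def IsCutVertex {V : Type} (G : SimpleGraph V) (v : V) : Prop :=
  ¬ (G.induce {u : V | u ≠ v}).Preconnected

/-- `G` is a path graph: its vertices can be enumerated `0, …, n-1` so that two
vertices are adjacent iff they are consecutive. -/
def IsPathGraph {V : Type} (G : SimpleGraph V) : Prop :=
  ∃ (n : ℕ) (e : V ≃ Fin n), ∀ u v : V,
    G.Adj u v ↔ ((e u : ℕ) + 1 = (e v : ℕ) ∨ (e v : ℕ) + 1 = (e u : ℕ))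

/-- `G` is a cycle graph (on at least 3 vertices). -/
def IsCycleGraphOn {V : Type} (G : SimpleGraph V) : Prop :=
  ∃ n : ℕ, 3 ≤ n ∧ ∃ e : V ≃ Fin n, ∀ u v : V,
    G.Adj u v ↔ (((e u : ℕ) + 1) % n = (e v : ℕ) ∨ ((e v : ℕ) + 1) % n = (e u : ℕ))

/-- `x` is a leaf of `T`: it has exactly one neighbor. -/
def IsLeaf {V : Type} (T : SimpleGraph V) (x : V) : Prop :=
  (T.neighborSet x).ncard = 1

/-- `G` is a chandelier with pivot `v`: `G - v` is a tree `T` and `v` is adjacent to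
exactly the leaves of `T`. -/
def IsChandelierWithPivot {V : Type} (G : SimpleGraph V) (v : V) : Prop :=
  (G.induce {u : V | u ≠ v}).IsTree ∧
    ∀ u : ↥{u : V | u ≠ v}, (G.Adj v u.val ↔ IsLeaf (G.induce {u : V | u ≠ v}) u)

/-- `G` is a chandelier. -/
def IsChandelier {V : Type} (G : SimpleGraph V) : Prop :=
  ∃ v : V, IsChandelierWithPivot G v

/-- `G` is a luxury chandelier: a chandelier (with pivot `v` and tree `T = G - v`)
such that the neighbor in `T` of each leaf of `T` has degree 2 in `T`. -/
def IsLuxuryChandelier {V : Type} (G : SimpleGraph V) : Prop :=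
  ∃ v : V, IsChandelierWithPivot G v ∧
    ∀ x y : ↥{u : V | u ≠ v}, (G.induce {u : V | u ≠ v}).Adj x y →
      IsLeaf (G.induce {u : V | u ≠ v}) x →
      ((G.induce {u : V | u ≠ v}).neighborSet y).ncard = 2

/-! ## Multigraphs and subdivisions -/

/-- A loopless multigraph on vertex set `V`: a symmetric multiplicity function. -/
structure Multigraph (V : Type) where
  m : V → V → ℕ
  symm : ∀ u v : V, m u v = m v u
  loopless : ∀ v : V, m v v = 0

/-- The multigraph associated with a simple graph (each edge has multiplicity 1). -/
noncomputable def SimpleGraph.toMultigraph {V : Type} (G : SimpleGraph V) : Multigraph V where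
  m u v := @ite ℕ (G.Adj u v) (Classical.dec _) 1 0
  symm u v := by
    beta_reduce
    by_cases h : G.Adj u v
    · rw [if_pos h, if_pos (G.adj_symm h)]
    · rw [if_neg h, if_neg (fun h' => h (G.adj_symm h'))]
  loopless v := by
    beta_reduce
    rw [if_neg G.irrefl]

/-- The interior (set of internal vertices) of a walk. -/
def walkInterior {V : Type} {G : SimpleGraph V} {a b : V} (p : G.Walk a b) : Set V :=
  {w : V | w ∈ p.support ∧ w ≠ a ∧ w ≠ b}

/-- A witness that the simple graph `H` is a `≥k`-subdivision of the multigraph `G`: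
each edge of `G` (counted with multiplicity) is replaced by a path with at least
`k+1` edges between (the images of) its endpoints, these paths being internally
disjoint from each other and from the branch vertices, and covering all of `H`. -/
structure MultiSubdivision {V W : Type} (G : Multigraph V) (H : SimpleGraph W) (k : ℕ) where
  /-- the embedding of branch vertices -/
  f : V ↪ W
  /-- the path replacing the `i`-th parallel edge between `u` and `v` -/
  path : ∀ u v : V, Fin (G.m u v) → H.Walk (f u) (f v)
  path_symm : ∀ (u v : V) (i : Fin (G.m u v)),
    path v u (Fin.cast (G.symm u v) i) = (path u v i).reverse
  path_ne : ∀ (u v : V) (i i' : Fin (G.m u v)), (i : ℕ) ≠ (i' : ℕ) →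
    path u v i ≠ path u v i'
  isPath : ∀ (u v : V) (i : Fin (G.m u v)), (path u v i).IsPath
  length_le : ∀ (u v : V) (i : Fin (G.m u v)), k + 1 ≤ (path u v i).length
  /-- the paths are internally disjoint from the branch vertices -/
  interior_avoid : ∀ (u v : V) (i : Fin (G.m u v)) (x : V),
    f x ∉ walkInterior (path u v i)
  /-- distinct paths are pairwise internally disjoint -/
  interior_disjoint : ∀ (u v : V) (i : Fin (G.m u v)) (u' v' : V) (i' : Fin (G.m u' v')),
    (walkInterior (path u v i) ∩ walkInterior (path u' v' i')).Nonempty →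
    (u = u' ∧ v = v' ∧ (i : ℕ) = (i' : ℕ)) ∨ (u = v' ∧ v = u' ∧ (i : ℕ) = (i' : ℕ))
  /-- every vertex of `H` is a branch vertex or an internal vertex of a path -/
  vertex_cover : ∀ w : W, (∃ x : V, f x = w) ∨
    ∃ (u v : V) (i : Fin (G.m u v)), w ∈ walkInterior (path u v i)
  /-- every edge of `H` lies on one of the paths -/
  edge_cover : ∀ e ∈ H.edgeSet, ∃ (u v : V) (i : Fin (G.m u v)), e ∈ (path u v i).edges

/-- `H` is a `≥k`-subdivision of the multigraph `G`. -/
def IsSubdivisionGE {V W : Type} (G : Multigraph V) (k : ℕ) (H : SimpleGraph W) : Prop :=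
  Nonempty (MultiSubdivision G H k)

/-- `H` is a subdivision of the simple graph `G` (every edge is replaced by a path
with at least one edge). -/
def IsSubdivision {V W : Type} (G : SimpleGraph V) (H : SimpleGraph W) : Prop :=
  IsSubdivisionGE G.toMultigraph 0 H

namespace Multigraph

/-- The underlying simple graph of a multigraph. -/
def support {V : Type} (G : Multigraph V) : SimpleGraph V where
  Adj u v := 0 < G.m u v
  symm := by
    constructor
    intro u v h
    rw [G.symm v u]
    exact h
  loopless := by
    constructor
    intro v h
    rw [G.loopless v] at h
    exact Nat.lt_irrefl 0 h

/-- A multigraph is connected if its underlying simple graph is. -/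
def Connected {V : Type} (G : Multigraph V) : Prop :=
  G.support.Connected

/-- A multigraph is 2-connected if it is connected, has at least two vertices, and
deleting any single vertex leaves it connected. -/
def TwoConnected {V : Type} (G : Multigraph V) : Prop :=
  G.support.Connected ∧ (∃ u v : V, u ≠ v) ∧
    ∀ v : V, (G.support.induce {u : V | u ≠ v}).Connected

/-- `v` is a feedback vertex of the multigraph `G`: `G - v` contains no cycle
(where a pair of parallel edges forms a cycle of length 2). -/
def IsFeedbackVertex {V : Type} (G : Multigraph V) (v : V) : Prop :=
  (G.support.induce {u : V | u ≠ v}).IsAcyclic ∧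
    ∀ u w : V, u ≠ v → w ≠ v → G.m u w ≤ 1

end Multigraph

/-! ## Induced cycles and big vertices -/

/-- `C` induces a cycle in `G`. -/
def IsInducedCycle {V : Type} (G : SimpleGraph V) (C : Set V) : Prop :=
  IsCycleGraphOn (G.induce C)

/-- `v` is a big vertex of the (induced cycle on) `C` with respect to the frame
representation `F`: `v ∈ C` and `F v` contains the frame of every vertex of `C`
outside `N[v]`. -/
def IsBigVertexOf {V : Type} (G : SimpleGraph V) (F : V → Box) (C : Set V) (v : V) : Prop :=
  v ∈ C ∧ ∀ u ∈ C, u ≠ v → ¬ G.Adj v u → Box.Inside (F u) (F v)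

/-- `v` is a big vertex of the representation `F`: it is a big vertex of some
induced cycle of `G`. -/
def IsBigVertex {V : Type} (G : SimpleGraph V) (F : V → Box) (v : V) : Prop :=
  ∃ C : Set V, IsInducedCycle G C ∧ IsBigVertexOf G F C v

/-! ## Gluing a chandelier onto a vertex -/

/-- The graph obtained from the disjoint union of `G₁` and `G₂` by identifying the
vertex `v` of `G₁` with the vertex `p` of `G₂`. -/
def glueAt {V₁ V₂ : Type} (G₁ : SimpleGraph V₁) (G₂ : SimpleGraph V₂) (v : V₁) (p : V₂) :
    SimpleGraph (V₁ ⊕ {x : V₂ // x ≠ p}) :=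
  SimpleGraph.fromRel (fun a b =>
    match a, b with
    | Sum.inl u, Sum.inl w => G₁.Adj u w
    | Sum.inr u, Sum.inr w => G₂.Adj u.val w.val
    | Sum.inl u, Sum.inr w => u = v ∧ G₂.Adj p w.val
    | Sum.inr _, Sum.inl _ => False)

/-! ## The multigraphs `Ĥ₁` and `Ĥ₂` -/

/-- The multiplicity matrix of `Ĥ₁` (vertices `a₁ = 0`, `b₁ = 1`, `v₁ = 2`, `v₂ = 3`,
`a₂ = 4`, `b₂ = 5`). -/
def H1hatMatrix : Matrix (Fin 6) (Fin 6) ℕ :=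
  !![0, 2, 1, 0, 0, 0;
     2, 0, 1, 0, 0, 0;
     1, 1, 0, 1, 0, 0;
     0, 0, 1, 0, 1, 1;
     0, 0, 0, 1, 0, 2;
     0, 0, 0, 1, 2, 0]

/-- The multigraph `Ĥ₁`: two disjoint digons `a₁b₁`, `a₂b₂`, and single edges
`a₁v₁`, `b₁v₁`, `v₁v₂`, `a₂v₂`, `b₂v₂`. -/
def H1hat : Multigraph (Fin 6) where
  m u v := H1hatMatrix u v
  symm := by intro u v; fin_cases u <;> fin_cases v <;> rfl
  loopless := by decide

/-- The multiplicity matrix of `Ĥ₂` (vertices `a₁ = 0`, `b₁ = 1`, `v = 2`,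
`a₂ = 3`, `b₂ = 4`). -/
def H2hatMatrix : Matrix (Fin 5) (Fin 5) ℕ :=
  !![0, 2, 1, 0, 0;
     2, 0, 1, 0, 0;
     1, 1, 0, 1, 1;
     0, 0, 1, 0, 2;
     0, 0, 1, 2, 0]

/-- The multigraph `Ĥ₂`: two digons `a₁b₁`, `a₂b₂`, and single edges
`a₁v`, `b₁v`, `a₂v`, `b₂v`. -/
def H2hat : Multigraph (Fin 5) where
  m u v := H2hatMatrix u v
  symm := by intro u v; fin_cases u <;> fin_cases v <;> rfl
  loopless := by decide

/-! ## Subdivisions of `K₄` and their type -/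

/-- The complete graph on four vertices. -/
def K4 : SimpleGraph (Fin 4) := ⊤

/-- The set of edges of `K₄` that are subdivided at least once in the subdivision
witnessed by `S` (i.e. replaced by a path with at least two edges). -/
def subdividedEdges {W : Type} {H : SimpleGraph W}
    (S : MultiSubdivision K4.toMultigraph H 0) : Set (Sym2 (Fin 4)) :=
  {e : Sym2 (Fin 4) | ∃ (u v : Fin 4) (i : Fin (K4.toMultigraph.m u v)),
    e = s(u, v) ∧ 2 ≤ (S.path u v i).length}

/-! ## Adding a twin -/

/-- The graph obtained from `G` by adding a twin of `v`: a new vertex, non-adjacent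
to `v`, whose neighborhood is exactly `N(v)`. -/
def addTwin {V : Type} (G : SimpleGraph V) (v : V) : SimpleGraph (V ⊕ Unit) :=
  SimpleGraph.fromRel (fun a b =>
    match a, b with
    | Sum.inl u, Sum.inl w => G.Adj u w
    | Sum.inr _, Sum.inl u => G.Adj v u
    | _, _ => False)

/-! ## The construction of Burling and Pawlik et al. -/

/-- A graph-stable set pair: a graph together with a collection of sets of vertices
(intended: stable sets). -/
structure GSPair : Type 1 where
  V : Type
  G : SimpleGraph V
  S : Set (Set V)

namespace GSPair

/-- The vertex type of `next P`: the original vertices, the vertices `(s, u)` of the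
copy `H_s` of the graph for each `s ∈ 𝒮`, and the new vertices `v_{s,t}`. -/
abbrev nextVertex (P : GSPair) : Type :=
  P.V ⊕ ((↥P.S × P.V) ⊕ (↥P.S × ↥P.S))

/-- The adjacency generator for the graph of `next P`. -/
def nextRel (P : GSPair) : P.nextVertex → P.nextVertex → Prop
  | Sum.inl u, Sum.inl v => P.G.Adj u v
  | Sum.inr (Sum.inl (s, u)), Sum.inr (Sum.inl (t, v)) => s = t ∧ P.G.Adj u v
  | Sum.inr (Sum.inr (s, t)), Sum.inr (Sum.inl (s', v)) => s = s' ∧ v ∈ (t : Set P.V)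
  | _, _ => False

/-- The procedure `next`: add a disjoint copy `H_s` of the graph for each `s ∈ 𝒮`, a
vertex `v_{s,t}` whose neighborhood is exactly the copy of `t` inside `H_s` for all
`s, t ∈ 𝒮`, and take as new collection of stable sets all `s ∪ t_s` and
`s ∪ {v_{s,t}}`. -/
def next (P : GSPair) : GSPair where
  V := P.nextVertex
  G := SimpleGraph.fromRel P.nextRel
  S := {A : Set P.nextVertex | ∃ s t : ↥P.S,
    A = (Sum.inl '' (s : Set P.V) : Set P.nextVertex) ∪
        ((fun u : P.V => (Sum.inr (Sum.inl (s, u)) : P.nextVertex)) '' (t : Set P.V)) ∨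
    A = (Sum.inl '' (s : Set P.V) : Set P.nextVertex) ∪ {Sum.inr (Sum.inr (s, t))}}

/-- The starting pair: a single vertex, with the single stable set consisting of
that vertex. -/
def base : GSPair := ⟨PUnit, ⊥, {Set.univ}⟩

/-- `P` is an induced subgraph-stable set pair of `Q`. -/
def IsInducedSubpair (P Q : GSPair) : Prop :=
  ∃ f : P.V ↪ Q.V, (∀ u v : P.V, P.G.Adj u v ↔ Q.G.Adj (f u) (f v)) ∧
    ∀ A ∈ P.S, ∃ B ∈ Q.S, A = f ⁻¹' B

/-- A graph-stable set pair is constructible if it is an induced subgraph-stable set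
pair of some iterate of `next` on the starting pair. -/
def Constructible (P : GSPair) : Prop :=
  ∃ i : ℕ, IsInducedSubpair P (next^[i] base)

end GSPair

namespace CycleLemmaAux

open Box

/-- `B` crosses `C`: the right side of `B` stabs vertically through `C`. -/
def Cross (B C : Box) : Prop :=
  B.x1 < C.x1 ∧ C.x1 < B.x2 ∧ B.x2 < C.x2 ∧ B.y1 < C.y1 ∧ C.y2 < B.y2

/-- `A` is strictly inside `B` (coordinatewise). -/
def SIn (A B : Box) : Prop :=
  B.x1 < A.x1 ∧ A.x2 < B.x2 ∧ B.y1 < A.y1 ∧ A.y2 < B.y2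

/-- The open interior of the region of a box. -/
def intRegion (B : Box) : Set (ℝ × ℝ) :=
  {p : ℝ × ℝ | B.x1 < p.1 ∧ p.1 < B.x2 ∧ B.y1 < p.2 ∧ p.2 < B.y2}

lemma mem_frame {B : Box} {a b : ℝ} (h1 : B.x1 ≤ a) (h2 : a ≤ B.x2)
    (h3 : B.y1 ≤ b) (h4 : b ≤ B.y2)
    (h5 : a = B.x1 ∨ a = B.x2 ∨ b = B.y1 ∨ b = B.y2) :
    ((a, b) : ℝ × ℝ) ∈ B.frame :=
  ⟨⟨h1, h2, h3, h4⟩, h5⟩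

lemma mem_leftSide {B : Box} {b : ℝ} (h3 : B.y1 ≤ b) (h4 : b ≤ B.y2) :
    ((B.x1, b) : ℝ × ℝ) ∈ B.leftSide := ⟨rfl, h3, h4⟩

lemma mem_rightSide {B : Box} {b : ℝ} (h3 : B.y1 ≤ b) (h4 : b ≤ B.y2) :
    ((B.x2, b) : ℝ × ℝ) ∈ B.rightSide := ⟨rfl, h3, h4⟩

lemma corners4 {B : Box} : ((B.x2, B.y2) : ℝ × ℝ) ∈ B.corners := by
  simp [Box.corners]

lemma corners3 {B : Box} : ((B.x2, B.y1) : ℝ × ℝ) ∈ B.corners := by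
  simp [Box.corners]

lemma corners_of {B : Box} {a b : ℝ} (h1 : a = B.x1 ∨ a = B.x2)
    (h2 : b = B.y1 ∨ b = B.y2) : ((a, b) : ℝ × ℝ) ∈ B.corners := by
  rcases h1 with h1 | h1 <;> rcases h2 with h2 | h2 <;> subst h1 <;> subst h2 <;>
    simp [Box.corners]

lemma not_mem_of_empty {X Y : Set (ℝ × ℝ)} (h : X ∩ Y = ∅) {p : ℝ × ℝ}
    (h1 : p ∈ X) (h2 : p ∈ Y) : False :=
  Set.eq_empty_iff_forall_notMem.mp h p ⟨h1, h2⟩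

/-- From points of `B.rightSide` on the top and bottom sides of `C`, plus corner- and
left-freeness, deduce that `B` crosses `C`. -/
lemma cross_of_right {B C : Box}
    (hcfBC : B.corners ∩ C.frame = ∅) (hcfCB : C.corners ∩ B.frame = ∅)
    (hlfBC : B.leftSide ∩ C.frame = ∅)
    (htop : (B.rightSide ∩ C.topSide).Nonempty)
    (hbot : (B.rightSide ∩ C.bottomSide).Nonempty) :
    Cross B C := by
  obtain ⟨q, ⟨hq1, hq2, hq3⟩, ⟨hq4, hq5, hq6⟩⟩ := htop
  obtain ⟨r, ⟨hr1, hr2, hr3⟩, ⟨hr4, hr5, hr6⟩⟩ := hbot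
  have hBx := B.hx; have hBy := B.hy; have hCx := C.hx; have hCy := C.hy
  -- basic inequalities
  have hb1 : B.y1 ≤ C.y2 := by rw [← hq4]; exact hq2
  have hb2 : C.y2 ≤ B.y2 := by rw [← hq4]; exact hq3
  have hb3 : B.y1 ≤ C.y1 := by rw [← hr4]; exact hr2
  have hb4 : C.x1 ≤ B.x2 := by rw [← hq1]; exact hq5
  have hb5 : B.x2 ≤ C.x2 := by rw [← hq1]; exact hq6
  have h1 : C.y2 < B.y2 := by
    rcases lt_or_eq_of_le hb2 with h | h
    · exact h
    · exact absurd (not_mem_of_empty hcfBC corners4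
        (mem_frame (by linarith) (by linarith) (by linarith) (by linarith)
          (Or.inr (Or.inr (Or.inr h.symm))))) id
  have h2 : B.y1 < C.y1 := by
    rcases lt_or_eq_of_le hb3 with h | h
    · exact h
    · exact absurd (not_mem_of_empty hcfBC corners3
        (mem_frame (by linarith) (by linarith) (by linarith) (by linarith)
          (Or.inr (Or.inr (Or.inl h))))) id
  have h3 : C.x1 < B.x2 := by
    rcases lt_or_eq_of_le hb4 with h | h
    · exact h
    · exfalso
      refine not_mem_of_empty hcfCB (corners_of (Or.inl rfl) (Or.inr rfl)) ?_
      rw [h]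
      exact mem_frame (by linarith) (by linarith) (by linarith) (by linarith)
        (Or.inr (Or.inl rfl))
  have h4 : B.x2 < C.x2 := by
    rcases lt_or_eq_of_le hb5 with h | h
    · exact h
    · exfalso
      refine not_mem_of_empty hcfCB (corners_of (Or.inr rfl) (Or.inr rfl)) ?_
      rw [← h]
      exact mem_frame (by linarith) (by linarith) (by linarith) (by linarith)
        (Or.inr (Or.inl rfl))
  have h0 : B.x1 < C.x1 := by
    by_contra hcon
    push_neg at hcon
    exact not_mem_of_empty hlfBC (mem_leftSide (by linarith) (by linarith))
      (mem_frame (by linarith) (by linarith) (by linarith) (by linarith)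
        (Or.inr (Or.inr (Or.inr rfl))) : ((B.x1, C.y2) : ℝ × ℝ) ∈ C.frame)
  exact ⟨h0, h3, h4, h2, h1⟩

/-- Two overlapping horizontal sides force a corner of one frame on the other. -/
lemma horiz_absurd {B C : Box} (hcfBC : B.corners ∩ C.frame = ∅)
    (hcfCB : C.corners ∩ B.frame = ∅) {p : ℝ × ℝ}
    (hpB : p ∈ B.region) (hpC : p ∈ C.region)
    (hB : p.2 = B.y1 ∨ p.2 = B.y2) (hC : p.2 = C.y1 ∨ p.2 = C.y2) : False := by
  obtain ⟨hB1, hB2, hB3, hB4⟩ := hpB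
  obtain ⟨hC1, hC2, hC3, hC4⟩ := hpC
  have hBy := B.hy; have hCy := C.hy
  rcases le_total B.x1 C.x1 with hle | hle
  · refine not_mem_of_empty hcfCB (corners_of (Or.inl rfl) (a := C.x1) (b := p.2) hC) ?_
    refine mem_frame hle (by linarith) (by rcases hB with h | h <;> linarith)
      (by rcases hB with h | h <;> linarith) (Or.inr (Or.inr hB))
  · refine not_mem_of_empty hcfBC (corners_of (Or.inl rfl) (a := B.x1) (b := p.2) hB) ?_
    refine mem_frame hle (by linarith) (by rcases hC with h | h <;> linarith)
      (by rcases hC with h | h <;> linarith) (Or.inr (Or.inr hC))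

/-- Any two intersecting frames (under restrictions (1)–(3)) cross. -/
lemma cross_or_cross {B C : Box}
    (hcfBC : B.corners ∩ C.frame = ∅) (hcfCB : C.corners ∩ B.frame = ∅)
    (hlfBC : B.leftSide ∩ C.frame = ∅) (hlfCB : C.leftSide ∩ B.frame = ∅)
    (hrcBC : (B.rightSide ∩ C.frame).Nonempty →
      (B.rightSide ∩ C.topSide).Nonempty ∧ (B.rightSide ∩ C.bottomSide).Nonempty)
    (hrcCB : (C.rightSide ∩ B.frame).Nonempty →
      (C.rightSide ∩ B.topSide).Nonempty ∧ (C.rightSide ∩ B.bottomSide).Nonempty)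
    (hmeet : (B.frame ∩ C.frame).Nonempty) : Cross B C ∨ Cross C B := by
  obtain ⟨p, hpB, hpC⟩ := hmeet
  obtain ⟨hpBr, hpBd⟩ := hpB
  obtain ⟨hpCr, hpCd⟩ := hpC
  rcases hpBd with h | h | h | h
  · exfalso
    refine not_mem_of_empty hlfBC ?_ ⟨hpCr, hpCd⟩
    have : p = (B.x1, p.2) := Prod.ext h rfl
    rw [this]
    exact mem_leftSide hpBr.2.2.1 hpBr.2.2.2
  · left
    have hc := hrcBC ⟨p, ⟨h, hpBr.2.2.1, hpBr.2.2.2⟩, ⟨hpCr, hpCd⟩⟩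
    exact cross_of_right hcfBC hcfCB hlfBC hc.1 hc.2
  all_goals (
    rcases hpCd with h' | h' | h' | h'
    · exfalso
      refine not_mem_of_empty hlfCB ?_ ⟨hpBr, Or.inr (Or.inr ?_)⟩
      · have : p = (C.x1, p.2) := Prod.ext h' rfl
        rw [this]
        exact mem_leftSide hpCr.2.2.1 hpCr.2.2.2
      · first | exact Or.inl h | exact Or.inr h
    · right
      have hc := hrcCB ⟨p, ⟨h', hpCr.2.2.1, hpCr.2.2.2⟩, ⟨hpBr, Or.inr (Or.inr ?_)⟩⟩
      · exact cross_of_right hcfCB hcfBC hlfCB hc.1 hc.2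
      · first | exact Or.inl h | exact Or.inr h
    all_goals (
      refine absurd (horiz_absurd hcfBC hcfCB hpBr hpCr ?_ ?_) id
      · first | exact Or.inl h | exact Or.inr h
      · first | exact Or.inl h' | exact Or.inr h'))

end CycleLemmaAux

namespace CycleLemmaAux

open Box

lemma nested_of_sink_aux {A B Vb : Box} (hA : Cross A Vb) (hB : Cross B Vb)
    (hd : A.frame ∩ B.frame = ∅) (hy : B.y1 < A.y1) : SIn A B := by
  obtain ⟨a1, a2, a3, a4, a5⟩ := hA
  obtain ⟨b1, b2, b3, b4, b5⟩ := hB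
  have hAx := A.hx; have hAy := A.hy; have hBx := B.hx; have hBy := B.hy
  have hVx := Vb.hx; have hVy := Vb.hy
  have hx1 : B.x1 < A.x1 := by
    by_contra hcon
    push_neg at hcon
    exact not_mem_of_empty hd
      (mem_frame (a := B.x1) (b := A.y1) (by linarith) (by linarith) le_rfl (by linarith)
        (Or.inr (Or.inr (Or.inl rfl))))
      (mem_frame le_rfl (by linarith) (by linarith) (by linarith) (Or.inl rfl))
  have hx2 : A.x2 < B.x2 := by
    by_contra hcon
    push_neg at hcon
    exact not_mem_of_empty hd
      (mem_frame (a := B.x2) (b := A.y1) (by linarith) (by linarith) le_rfl (by linarith)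
        (Or.inr (Or.inr (Or.inl rfl))))
      (mem_frame (by linarith) le_rfl (by linarith) (by linarith) (Or.inr (Or.inl rfl)))
  have hy2 : A.y2 < B.y2 := by
    rcases lt_trichotomy A.y2 B.y2 with h | h | h
    · exact h
    · exfalso
      exact not_mem_of_empty hd
        (mem_frame (a := Vb.x1) (b := A.y2) (by linarith) (by linarith) (by linarith) le_rfl
          (Or.inr (Or.inr (Or.inr rfl))))
        (mem_frame (by linarith) (by linarith) (by linarith) (by linarith)
          (Or.inr (Or.inr (Or.inr h))))
    · exfalso
      exact not_mem_of_empty hd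
        (mem_frame (a := A.x1) (b := B.y2) le_rfl (by linarith) (by linarith) (by linarith)
          (Or.inl rfl))
        (mem_frame (by linarith) (by linarith) (by linarith) le_rfl
          (Or.inr (Or.inr (Or.inr rfl))))
  exact ⟨hx1, hx2, hy, hy2⟩

/-- The two neighbours of a sink are nested. -/
lemma nested_of_sink {A B Vb : Box} (hA : Cross A Vb) (hB : Cross B Vb)
    (hd : A.frame ∩ B.frame = ∅) : SIn A B ∨ SIn B A := by
  rcases lt_trichotomy B.y1 A.y1 with h | h | h
  · exact Or.inl (nested_of_sink_aux hA hB hd h)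
  · exfalso
    obtain ⟨a1, a2, a3, a4, a5⟩ := hA
    obtain ⟨b1, b2, b3, b4, b5⟩ := hB
    have hBy := B.hy
    refine not_mem_of_empty hd
      (mem_frame (a := Vb.x1) (b := A.y1) (by linarith) (by linarith) le_rfl A.hy.le
        (Or.inr (Or.inr (Or.inl rfl))))
      (mem_frame (by linarith) (by linarith) (by linarith) (by linarith)
        (Or.inr (Or.inr (Or.inl h.symm))))
  · refine Or.inr (nested_of_sink_aux hB hA ?_ h)
    rw [Set.inter_comm]; exact hd
lemma frame_subset_intRegion {A B : Box} (h : SIn A B) : A.frame ⊆ intRegion B := by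
  rintro p ⟨⟨r1, r2, r3, r4⟩, -⟩
  obtain ⟨h1, h2, h3, h4⟩ := h
  exact ⟨by linarith, by linarith, by linarith, by linarith⟩

lemma intRegion_subset_region (B : Box) : intRegion B ⊆ B.region := by
  rintro p ⟨h1, h2, h3, h4⟩
  exact ⟨h1.le, h2.le, h3.le, h4.le⟩

lemma isOpen_intRegion (B : Box) : IsOpen (intRegion B) := by
  have : intRegion B = (Set.Ioo B.x1 B.x2) ×ˢ (Set.Ioo B.y1 B.y2) := by
    ext p
    simp only [intRegion, Set.mem_setOf_eq, Set.mem_prod, Set.mem_Ioo]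
    tauto
  rw [this]
  exact isOpen_Ioo.prod isOpen_Ioo

lemma isClosed_region (B : Box) : IsClosed B.region := by
  have : B.region = (Set.Icc B.x1 B.x2) ×ˢ (Set.Icc B.y1 B.y2) := by
    ext p
    simp only [Box.region, Set.mem_setOf_eq, Set.mem_prod, Set.mem_Icc]
    tauto
  rw [this]
  exact isClosed_Icc.prod isClosed_Icc

lemma frame_eq_union (B : Box) :
    B.frame = (B.leftSide ∪ B.bottomSide) ∪ (B.rightSide ∪ B.topSide) := by
  have hx := B.hx; have hy := B.hy
  ext p
  constructor
  · rintro ⟨⟨r1, r2, r3, r4⟩, h | h | h | h⟩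
    · exact Or.inl (Or.inl ⟨h, r3, r4⟩)
    · exact Or.inr (Or.inl ⟨h, r3, r4⟩)
    · exact Or.inl (Or.inr ⟨h, r1, r2⟩)
    · exact Or.inr (Or.inr ⟨h, r1, r2⟩)
  · rintro ((⟨h1, h2, h3⟩ | ⟨h1, h2, h3⟩) | (⟨h1, h2, h3⟩ | ⟨h1, h2, h3⟩))
    · exact ⟨⟨le_of_eq h1.symm, by linarith, h2, h3⟩, Or.inl h1⟩
    · exact ⟨⟨h2, h3, le_of_eq h1.symm, by linarith⟩, Or.inr (Or.inr (Or.inl h1))⟩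
    · exact ⟨⟨by linarith, le_of_eq h1, h2, h3⟩, Or.inr (Or.inl h1)⟩
    · exact ⟨⟨h2, h3, by linarith, le_of_eq h1⟩, Or.inr (Or.inr (Or.inr h1))⟩

lemma convex_side_vert (c y1 y2 : ℝ) :
    Convex ℝ {p : ℝ × ℝ | p.1 = c ∧ y1 ≤ p.2 ∧ p.2 ≤ y2} := by
  have : {p : ℝ × ℝ | p.1 = c ∧ y1 ≤ p.2 ∧ p.2 ≤ y2} = {c} ×ˢ Set.Icc y1 y2 := by
    ext p
    simp only [Set.mem_setOf_eq, Set.mem_prod, Set.mem_singleton_iff, Set.mem_Icc]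
  rw [this]
  exact (convex_singleton c).prod (convex_Icc y1 y2)

lemma convex_side_horiz (c x1 x2 : ℝ) :
    Convex ℝ {p : ℝ × ℝ | p.2 = c ∧ x1 ≤ p.1 ∧ p.1 ≤ x2} := by
  have : {p : ℝ × ℝ | p.2 = c ∧ x1 ≤ p.1 ∧ p.1 ≤ x2} = Set.Icc x1 x2 ×ˢ {c} := by
    ext p
    simp only [Set.mem_setOf_eq, Set.mem_prod, Set.mem_singleton_iff, Set.mem_Icc]
    tauto
  rw [this]
  exact (convex_Icc x1 x2).prod (convex_singleton c)

lemma frame_preconnected (B : Box) : IsPreconnected B.frame := by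
  have hx := B.hx; have hy := B.hy
  have h1 : IsPreconnected (B.leftSide ∪ B.bottomSide) := by
    refine IsPreconnected.union (B.x1, B.y1) ?_ ?_ ?_ ?_
    · exact ⟨rfl, le_rfl, hy.le⟩
    · exact ⟨rfl, le_rfl, hx.le⟩
    · exact (convex_side_vert B.x1 B.y1 B.y2).isPreconnected
    · exact (convex_side_horiz B.y1 B.x1 B.x2).isPreconnected
  have h2 : IsPreconnected (B.rightSide ∪ B.topSide) := by
    refine IsPreconnected.union (B.x2, B.y2) ?_ ?_ ?_ ?_
    · exact ⟨rfl, hy.le, le_rfl⟩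
    · exact ⟨rfl, hx.le, le_rfl⟩
    · exact (convex_side_vert B.x2 B.y1 B.y2).isPreconnected
    · exact (convex_side_horiz B.y2 B.x1 B.x2).isPreconnected
  rw [frame_eq_union]
  refine IsPreconnected.union (B.x2, B.y1) ?_ ?_ h1 h2
  · exact Or.inr ⟨rfl, hx.le, le_rfl⟩
  · exact Or.inl ⟨rfl, le_rfl, hy.le⟩

/-- A connected frame avoiding the frame of `W` and meeting its interior lies inside. -/
lemma escape {B W : Box} (h1 : B.frame ∩ W.frame = ∅)
    (h2 : (B.frame ∩ intRegion W).Nonempty) : B.frame ⊆ intRegion W := by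
  have hcover : B.frame ⊆ intRegion W ∪ W.regionᶜ := by
    intro p hp
    by_cases hreg : p ∈ W.region
    · left
      obtain ⟨r1, r2, r3, r4⟩ := hreg
      refine ⟨lt_of_le_of_ne r1 ?_, lt_of_le_of_ne r2 ?_, lt_of_le_of_ne r3 ?_,
        lt_of_le_of_ne r4 ?_⟩
      · intro h; exact not_mem_of_empty h1 hp ⟨⟨r1, r2, r3, r4⟩, Or.inl h.symm⟩
      · intro h; exact not_mem_of_empty h1 hp ⟨⟨r1, r2, r3, r4⟩, Or.inr (Or.inl h)⟩
      · intro h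
        exact not_mem_of_empty h1 hp ⟨⟨r1, r2, r3, r4⟩, Or.inr (Or.inr (Or.inl h.symm))⟩
      · intro h
        exact not_mem_of_empty h1 hp ⟨⟨r1, r2, r3, r4⟩, Or.inr (Or.inr (Or.inr h))⟩
    · exact Or.inr hreg
  have hdisj : Disjoint (intRegion W) (W.regionᶜ) := by
    rw [Set.disjoint_compl_right_iff_subset]
    exact intRegion_subset_region W
  exact IsPreconnected.subset_left_of_subset_union (isOpen_intRegion W)
    (isClosed_region W).isOpen_compl hdisj hcover h2 (frame_preconnected B)

end CycleLemmaAux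

namespace CycleLemmaAux

open Box

/-- Walking along an induced path whose first frame is strictly inside `F w` and whose
vertices are nonadjacent to `w`, every frame stays strictly inside `F w`. -/
lemma walk {V : Type} {G : SimpleGraph V} {F : V → Box} (hF : IsFrameRepresentation G F)
    {n : ℕ} (hn : 4 ≤ n) (d : ℕ → V) (w : V)
    (hadj : ∀ j, j < n - 2 → G.Adj (d j) (d (j + 1)))
    (hnadj : ∀ j, j ≤ n - 4 → ¬ G.Adj w (d j) ∧ w ≠ d j)
    (base : (F (d 0)).frame ⊆ intRegion (F w)) :
    ∀ j, j ≤ n - 4 → (F (d j)).frame ⊆ intRegion (F w) := by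
  intro j
  induction j with
  | zero => intro _; exact base
  | succ j ih =>
    intro hj
    have hprev := ih (by omega)
    have hadjj : G.Adj (d j) (d (j + 1)) := hadj j (by omega)
    have hmeet : ((F (d j)).frame ∩ (F (d (j + 1))).frame).Nonempty :=
      (hF.adj_iff _ _ hadjj.ne).mp hadjj
    obtain ⟨p, hp1, hp2⟩ := hmeet
    have hdisj : (F (d (j + 1))).frame ∩ (F w).frame = ∅ := by
      obtain ⟨hna, hne⟩ := hnadj (j + 1) hj
      rw [Set.inter_comm]
      by_contra hcon
      exact hna ((hF.adj_iff w (d (j + 1)) hne).mpr (Set.nonempty_iff_ne_empty.mpr hcon))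
    exact escape hdisj ⟨p, hp2, hprev hp1⟩

end CycleLemmaAux

open CycleLemmaAux

/-- **Cycle Lemma.** Let `(F v)` be a representation of a restricted
frame graph `G`. Every induced cycle `C` of `G` has a big vertex, i.e. a vertex `v`
of `C` such that `F v` contains the frame of every vertex `u` of `C` with
`u ∉ N[v]`; moreover any two distinct big vertices of `C` are adjacent. -/
theorem cycle_lemma
    {V : Type} [Fintype V] (G : SimpleGraph V) (F : V → Box)
    (hF : IsFrameRepresentation G F) (C : Set V) (hC : IsInducedCycle G C) :
    (∃ v : V, IsBigVertexOf G F C v) ∧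
      ∀ u v : V, IsBigVertexOf G F C u → IsBigVertexOf G F C v → u ≠ v → G.Adj u v := by
  obtain ⟨n, hn3, e, he⟩ := hC
  have npos : 0 < n := by omega
  -- Part 2 : two big vertices are adjacent.
  have part2 : ∀ u v : V, IsBigVertexOf G F C u → IsBigVertexOf G F C v → u ≠ v →
      G.Adj u v := by
    intro u v hu hv huv
    by_contra hnadj
    have h1 : Box.Inside (F v) (F u) := hu.2 v hv.1 (Ne.symm huv) hnadj
    have h2 : Box.Inside (F u) (F v) := hv.2 u hu.1 huv (fun h => hnadj h.symm)
    have cA : (((F u).x1, (F u).y1) : ℝ × ℝ) ∈ (F u).frame :=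
      mem_frame le_rfl (F u).hx.le le_rfl (F u).hy.le (Or.inl rfl)
    have cB : (((F v).x1, (F v).y1) : ℝ × ℝ) ∈ (F v).frame :=
      mem_frame le_rfl (F v).hx.le le_rfl (F v).hy.le (Or.inl rfl)
    have hA : (F v).x1 ≤ (F u).x1 ∧ (F u).x1 ≤ (F v).x2 ∧ (F v).y1 ≤ (F u).y1 ∧
        (F u).y1 ≤ (F v).y2 := h2.2 cA
    have hB : (F u).x1 ≤ (F v).x1 ∧ (F v).x1 ≤ (F u).x2 ∧ (F u).y1 ≤ (F v).y1 ∧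
        (F v).y1 ≤ (F u).y2 := h1.2 cB
    have hx : (F u).x1 = (F v).x1 := le_antisymm hB.1 hA.1
    exact not_mem_of_empty h2.1 cA
      (mem_frame hA.1 hA.2.1 hA.2.2.1 hA.2.2.2 (Or.inl hx))
  refine ⟨?_, part2⟩
  -- A helper: adjacency in `G` between vertices of `C`, in terms of the cyclic order.
  have hval : ∀ a b : ↥C, (G.induce C).Adj a b ↔ G.Adj a.val b.val := fun a b => Iff.rfl
  rcases Nat.lt_or_ge n 4 with hn4 | hn4
  · -- n = 3 : triangle, every vertex is (vacuously) big
    have hn : n = 3 := by omega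
    subst hn
    refine ⟨(e.symm ⟨0, by omega⟩).val, (e.symm _).property, ?_⟩
    intro u huC hune hnadj
    exfalso
    apply hnadj
    set i : Fin 3 := e ⟨u, huC⟩ with hi
    have hu : u = (e.symm i).val := by rw [hi, Equiv.symm_apply_apply]
    have h := he (e.symm ⟨0, by omega⟩) ⟨u, huC⟩
    rw [Equiv.apply_symm_apply, hval] at h
    have hne0 : (i : ℕ) ≠ 0 := by
      intro hcon
      apply hune
      rw [hu]
      have hieq : i = ⟨0, by omega⟩ := Fin.ext hcon
      rw [hieq]
    have hlt : (i : ℕ) < 3 := i.isLt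
    apply h.mpr
    rcases (by omega : (i : ℕ) = 1 ∨ (i : ℕ) = 2) with h1 | h1
    · left
      show (0 + 1) % 3 = (i : ℕ)
      omega
    · right
      show ((i : ℕ) + 1) % 3 = 0
      omega
  -- Main case : n ≥ 4.
  · set cf : Fin n → V := fun i => (e.symm i).val with hcf
    set c' : ℕ → V := fun m => cf ⟨m % n, Nat.mod_lt m npos⟩ with hc'
    have hmem : ∀ m, c' m ∈ C := fun m => (e.symm _).property
    have hcfa : ∀ i j : Fin n, G.Adj (cf i) (cf j) ↔
        (((i : ℕ) + 1) % n = (j : ℕ) ∨ ((j : ℕ) + 1) % n = (i : ℕ)) := by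
      intro i j
      have h := he (e.symm i) (e.symm j)
      rw [Equiv.apply_symm_apply, Equiv.apply_symm_apply, hval] at h
      exact h
    have hcong : ∀ x y : ℕ, x % n = y % n → c' x = c' y := by
      intro x y h
      simp only [hc']
      exact congrArg cf (Fin.ext h)
    have hinj : ∀ x y : ℕ, c' x = c' y → x % n = y % n := by
      intro x y h
      simp only [hc', hcf] at h
      exact congrArg Fin.val (e.symm.injective (Subtype.coe_injective h))
    have hAdj' : ∀ m : ℕ, G.Adj (c' m) (c' (m + 1)) := by
      intro m
      apply (hcfa _ _).mpr
      left
      show ((m % n) + 1) % n = (m + 1) % n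
      rw [Nat.mod_add_mod]
    have hne2 : ∀ x y : ℕ, x ≤ y → (y - x) % n ≠ 0 → c' x ≠ c' y := by
      intro x y hxy h hcon
      apply h
      obtain ⟨k, hk⟩ := (Nat.modEq_iff_dvd' hxy).mp (hinj x y hcon)
      rw [hk, Nat.mul_mod_right]
    have hNadj2 : ∀ x y : ℕ, x ≤ y → 2 ≤ (y - x) % n → (y - x) % n ≤ n - 2 →
        ¬ G.Adj (c' x) (c' y) := by
      intro x y hxy h2 h3 hadj
      rcases (hcfa _ _).mp hadj with h | h
      · have hx1 : (x + 1) % n = y % n := by rw [← Nat.mod_add_mod]; exact h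
        by_cases hle : x + 1 ≤ y
        · obtain ⟨k, hk⟩ := (Nat.modEq_iff_dvd' hle).mp hx1
          have hyx : y - x = n * k + 1 := by omega
          rw [hyx, Nat.mul_add_mod, Nat.mod_eq_of_lt (by omega)] at h2
          omega
        · have hyx : y - x = 0 := by omega
          rw [hyx, Nat.zero_mod] at h2
          omega
      · have hy1 : x % n = (y + 1) % n := by rw [← Nat.mod_add_mod (y) n 1]; exact h.symm
        obtain ⟨k, hk⟩ := (Nat.modEq_iff_dvd' (by omega : x ≤ y + 1)).mp hy1
        rcases k with _ | k'
        · rw [Nat.mul_zero] at hk; omega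
        · rw [Nat.mul_succ] at hk
          have hyx : y - x = n * k' + (n - 1) := by
            have := Nat.le.intro hk.symm
            generalize n * k' = t at hk ⊢
            omega
          rw [hyx, Nat.mul_add_mod, Nat.mod_eq_of_lt (by omega)] at h3
          omega
    -- orient the edges of the cycle; find a sink
    have hcr : ∀ m : ℕ, Cross (F (c' m)) (F (c' (m + 1))) ∨
        Cross (F (c' (m + 1))) (F (c' m)) := by
      intro m
      have hadjm := hAdj' m
      have hnem := hadjm.ne
      exact cross_or_cross (hF.corner_free _ _ hnem) (hF.corner_free _ _ hnem.symm)
        (hF.left_free _ _ hnem) (hF.left_free _ _ hnem.symm)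
        (hF.right_cross _ _ hnem) (hF.right_cross _ _ hnem.symm)
        ((hF.adj_iff _ _ hnem).mp hadjm)
    have hsink : ∃ m : ℕ, Cross (F (c' m)) (F (c' (m + 1))) ∧
        ¬ Cross (F (c' (m + 1))) (F (c' (m + 2))) := by
      by_contra hcon
      push_neg at hcon
      by_cases hex : ∃ m, Cross (F (c' m)) (F (c' (m + 1)))
      · obtain ⟨m0, hm0⟩ := hex
        have hall : ∀ k : ℕ, Cross (F (c' (m0 + k))) (F (c' (m0 + k + 1))) := by
          intro k
          induction k with
          | zero => exact hm0
          | succ k ih => exact hcon (m0 + k) ih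
        have hmono : ∀ k : ℕ, (F (c' m0)).y1 < (F (c' (m0 + k + 1))).y1 := by
          intro k
          induction k with
          | zero => exact (hall 0).2.2.2.1
          | succ k ih => exact lt_trans ih (hall (k + 1)).2.2.2.1
        have hper : (F (c' (m0 + n))).y1 = (F (c' m0)).y1 := by
          rw [hcong (m0 + n) m0 (Nat.add_mod_right m0 n)]
        have hfin := hmono (n - 1)
        rw [show m0 + (n - 1) + 1 = m0 + n by omega, hper] at hfin
        exact lt_irrefl _ hfin
      · push_neg at hex
        have hdec : ∀ m, Cross (F (c' (m + 1))) (F (c' m)) :=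
          fun m => (hcr m).resolve_left (hex m)
        have hmono : ∀ k : ℕ, (F (c' (k + 1))).y1 < (F (c' 0)).y1 := by
          intro k
          induction k with
          | zero => exact (hdec 0).2.2.2.1
          | succ k ih => exact lt_trans (hdec (k + 1)).2.2.2.1 ih
        have hper : (F (c' n)).y1 = (F (c' 0)).y1 := by
          rw [hcong n 0 (by rw [Nat.mod_self, Nat.zero_mod])]
        have hfin := hmono (n - 1)
        rw [show n - 1 + 1 = n by omega, hper] at hfin
        exact lt_irrefl _ hfin
    obtain ⟨m, hCa, hnotD⟩ := hsink
    have hCb : Cross (F (c' (m + 2))) (F (c' (m + 1))) := (hcr (m + 1)).resolve_left hnotD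
    have habne : c' m ≠ c' (m + 2) := by
      apply hne2 m (m + 2) (by omega)
      rw [show m + 2 - m = 2 by omega, Nat.mod_eq_of_lt (by omega)]
      omega
    have habnadj : ¬ G.Adj (c' m) (c' (m + 2)) := by
      apply hNadj2 m (m + 2) (by omega) <;>
        rw [show m + 2 - m = 2 by omega, Nat.mod_eq_of_lt (by omega)] <;> omega
    have habdisj : (F (c' m)).frame ∩ (F (c' (m + 2))).frame = ∅ := by
      by_contra hcon
      exact habnadj ((hF.adj_iff _ _ habne).mpr (Set.nonempty_iff_ne_empty.mpr hcon))
    have hperiodic : c' (m + n) = c' m := hcong _ _ (Nat.add_mod_right m n)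
    have hper2 : c' (m + n + 2) = c' (m + 2) := by
      apply hcong
      rw [show m + n + 2 = (m + 2) + n by omega]
      exact Nat.add_mod_right (m + 2) n
    rcases nested_of_sink hCa hCb habdisj with hnest | hnest
    · -- the frame of `a = c' m` is inside that of `b = c' (m+2)` : `b` is big.
      refine ⟨c' (m + 2), hmem (m + 2), ?_⟩
      have hwadj : ∀ j, j < n - 2 →
          G.Adj (c' (m + 2 * n - j)) (c' (m + 2 * n - (j + 1))) := by
        intro j hj
        have h1 : (m + 2 * n - (j + 1)) + 1 = m + 2 * n - j := by omega
        have h := hAdj' (m + 2 * n - (j + 1))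
        rw [h1] at h
        exact h.symm
      have hwnadj : ∀ j, j ≤ n - 4 → ¬ G.Adj (c' (m + 2)) (c' (m + 2 * n - j)) ∧
          c' (m + 2) ≠ c' (m + 2 * n - j) := by
        intro j hj
        have hyx : (m + 2 * n - j) - (m + 2) = n + (n - 2 - j) := by omega
        have hmod : ((m + 2 * n - j) - (m + 2)) % n = n - 2 - j := by
          rw [hyx, Nat.add_mod_left, Nat.mod_eq_of_lt (by omega)]
        constructor
        · exact hNadj2 (m + 2) (m + 2 * n - j) (by omega) (by rw [hmod]; omega)
            (by rw [hmod]; omega)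
        · exact hne2 (m + 2) (m + 2 * n - j) (by omega) (by rw [hmod]; omega)
      have hwbase : (F (c' (m + 2 * n - 0))).frame ⊆ intRegion (F (c' (m + 2))) := by
        have h0 : c' (m + 2 * n - 0) = c' m := by
          apply hcong
          rw [show m + 2 * n - 0 = m + n * 2 by omega, Nat.add_mul_mod_self_left]
        rw [h0]
        exact frame_subset_intRegion hnest
      have hwalk : ∀ j, j ≤ n - 4 →
          (F (c' (m + 2 * n - j))).frame ⊆ intRegion (F (c' (m + 2))) :=
        walk hF hn4 (fun j => c' (m + 2 * n - j)) (c' (m + 2)) hwadj hwnadj hwbase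
      -- now prove that every nonneighbour of `b` in `C` is inside `F b`
      intro u huC hub hnadjb
      have hui : c' ((e ⟨u, huC⟩ : Fin n) : ℕ) = u := by
        show cf ⟨((e ⟨u, huC⟩ : Fin n) : ℕ) % n, _⟩ = u
        have h1 : (⟨((e ⟨u, huC⟩ : Fin n) : ℕ) % n, Nat.mod_lt _ npos⟩ : Fin n)
            = e ⟨u, huC⟩ := Fin.ext (Nat.mod_eq_of_lt (e ⟨u, huC⟩).isLt)
        rw [h1]
        show (e.symm (e ⟨u, huC⟩)).val = u
        rw [Equiv.symm_apply_apply]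
      set i : ℕ := ((e ⟨u, huC⟩ : Fin n) : ℕ) with hidef
      have hilt : i < n := (e ⟨u, huC⟩).isLt
      set T : ℕ := m + 2 * n - i with hT
      set j0 : ℕ := T % n with hj0
      have hj0lt : j0 < n := Nat.mod_lt _ npos
      have hj0T : j0 ≤ T := Nat.mod_le T n
      have hdj0 : c' (m + 2 * n - j0) = u := by
        rw [← hui]
        apply hcong
        have h2 : m + 2 * n - j0 = i + (T - j0) := by omega
        have h3 : T - j0 = n * (T / n) := by
          refine Nat.sub_eq_of_eq_add ?_
          rw [hj0]
          exact (Nat.div_add_mod T n).symm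
        rw [h2, h3, Nat.add_mul_mod_self_left]
      have hj0le : j0 ≤ n - 4 := by
        by_contra hcon
        push_neg at hcon
        rcases (by omega : j0 = n - 3 ∨ j0 = n - 2 ∨ j0 = n - 1) with h | h | h
        · apply hnadjb
          have hadjx := hAdj' (m + n + 2)
          rw [hper2] at hadjx
          have hu3 : c' (m + n + 3) = u := by
            rw [← hdj0, h]
            exact congrArg c' (by omega)
          rw [hu3] at hadjx
          exact hadjx
        · apply hub
          rw [← hdj0, h]
          rw [show m + 2 * n - (n - 2) = m + n + 2 by omega]
          exact hper2
        · apply hnadjb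
          have hadjx := hAdj' (m + n + 1)
          rw [hper2] at hadjx
          have hu1 : c' (m + n + 1) = u := by
            rw [← hdj0, h]
            exact congrArg c' (by omega)
          rw [hu1] at hadjx
          exact hadjx.symm
      have hsub : (F (c' (m + 2 * n - j0))).frame ⊆ intRegion (F (c' (m + 2))) :=
        hwalk j0 hj0le
      rw [hdj0] at hsub
      refine ⟨?_, hsub.trans (intRegion_subset_region _)⟩
      by_contra hcon
      exact hnadjb
        (((hF.adj_iff u (c' (m + 2)) hub).mpr (Set.nonempty_iff_ne_empty.mpr hcon)).symm)
    · -- symmetric case : the frame of `b` is inside that of `a = c' m` : `a` is big.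
      refine ⟨c' m, hmem m, ?_⟩
      have hwadj : ∀ j, j < n - 2 → G.Adj (c' (m + 2 + j)) (c' (m + 2 + (j + 1))) := by
        intro j hj
        exact hAdj' (m + 2 + j)
      have hwnadj : ∀ j, j ≤ n - 4 → ¬ G.Adj (c' m) (c' (m + 2 + j)) ∧
          c' m ≠ c' (m + 2 + j) := by
        intro j hj
        have hmod : ((m + n) - (m + 2 + j)) % n = n - 2 - j := by
          rw [show (m + n) - (m + 2 + j) = n - 2 - j by omega,
            Nat.mod_eq_of_lt (by omega)]
        have h1 := hNadj2 (m + 2 + j) (m + n) (by omega) (by rw [hmod]; omega)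
          (by rw [hmod]; omega)
        rw [hperiodic] at h1
        have h2 := hne2 (m + 2 + j) (m + n) (by omega) (by rw [hmod]; omega)
        rw [hperiodic] at h2
        exact ⟨fun hadj => h1 hadj.symm, fun hcon => h2 hcon.symm⟩
      have hwbase : (F (c' (m + 2 + 0))).frame ⊆ intRegion (F (c' m)) :=
        frame_subset_intRegion hnest
      have hwalk : ∀ j, j ≤ n - 4 →
          (F (c' (m + 2 + j))).frame ⊆ intRegion (F (c' m)) :=
        walk hF hn4 (fun j => c' (m + 2 + j)) (c' m) hwadj hwnadj hwbase
      intro u huC hua hnadja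
      have hui : c' ((e ⟨u, huC⟩ : Fin n) : ℕ) = u := by
        show cf ⟨((e ⟨u, huC⟩ : Fin n) : ℕ) % n, _⟩ = u
        have h1 : (⟨((e ⟨u, huC⟩ : Fin n) : ℕ) % n, Nat.mod_lt _ npos⟩ : Fin n)
            = e ⟨u, huC⟩ := Fin.ext (Nat.mod_eq_of_lt (e ⟨u, huC⟩).isLt)
        rw [h1]
        show (e.symm (e ⟨u, huC⟩)).val = u
        rw [Equiv.symm_apply_apply]
      set i : ℕ := ((e ⟨u, huC⟩ : Fin n) : ℕ) with hidef
      have hilt : i < n := (e ⟨u, huC⟩).isLt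
      set r : ℕ := (m + 2) % n with hr
      have hrlt : r < n := Nat.mod_lt _ npos
      set j0 : ℕ := (i + n - r) % n with hj0
      have hj0lt : j0 < n := Nat.mod_lt _ npos
      have hdj0 : c' (m + 2 + j0) = u := by
        rw [← hui]
        apply hcong
        calc (m + 2 + j0) % n = ((m + 2) % n + j0 % n) % n := Nat.add_mod _ _ _
          _ = (r + j0) % n := by rw [← hr, Nat.mod_eq_of_lt hj0lt]
          _ = (r + (i + n - r)) % n := by rw [hj0, Nat.add_mod_mod]
          _ = (i + n) % n := by rw [show r + (i + n - r) = i + n by omega]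
          _ = i % n := Nat.add_mod_right i n
      have hj0le : j0 ≤ n - 4 := by
        by_contra hcon
        push_neg at hcon
        rcases (by omega : j0 = n - 3 ∨ j0 = n - 2 ∨ j0 = n - 1) with h | h | h
        · apply hnadja
          have hadjx := hAdj' (m + n - 1)
          rw [show m + n - 1 + 1 = m + n by omega, hperiodic] at hadjx
          have hu3 : c' (m + n - 1) = u := by
            rw [← hdj0, h]
            exact congrArg c' (by omega)
          rw [hu3] at hadjx
          exact hadjx.symm
        · apply hua
          rw [← hdj0, h, show m + 2 + (n - 2) = m + n by omega]
          exact hperiodic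
        · apply hnadja
          have hadjx := hAdj' (m + n)
          rw [hperiodic] at hadjx
          have hu1 : c' (m + n + 1) = u := by
            rw [← hdj0, h]
            exact congrArg c' (by omega)
          rw [hu1] at hadjx
          exact hadjx
      have hsub : (F (c' (m + 2 + j0))).frame ⊆ intRegion (F (c' m)) := hwalk j0 hj0le
      rw [hdj0] at hsub
      refine ⟨?_, hsub.trans (intRegion_subset_region _)⟩
      by_contra hcon
      exact hnadja
        (((hF.adj_iff u (c' m) hua).mpr (Set.nonempty_iff_ne_empty.mpr hcon)).symm)
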